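/- For every n ≥ 4, in the target group G_D(n), the identity t_{12}·t_{34} = ((2 3)(1 4))·t_{13}·t_{24} holds, where (2 3)(1 4) denotes the image in G_D(n) of the product of the transpositions (2 3) and (1 4) of Sym(Fin n). In particular the double cosets N·t_{12}t_{34}·N and N·t_{13}t_{24}·N coincide, where N is the image of Sym(Fin n) in G_D(n). -/
import Mathlib


open Monoid Pointwise

/-- The type of `k`-element subsets of `Fin n`. -/
abbrev KSub (n k : ℕ) := {s : Finset (Fin n) // s.card = k}

/-- The free product of copies of `ℤ/2ℤ` indexed by the `k`-element subsets of `Fin n`. -/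
abbrev FP (n k : ℕ) := Monoid.CoprodI (fun _ : KSub n k => Multiplicative (ZMod 2))

/-- The symmetric generator `t_S`. -/
def tFP {n k : ℕ} (S : KSub n k) : FP n k :=
  Monoid.CoprodI.of (i := S) (Multiplicative.ofAdd (1 : ZMod 2))

/-- The action of a permutation of `Fin n` on the `k`-element subsets. -/
instance KSub.instMulAction (n k : ℕ) : MulAction (Equiv.Perm (Fin n)) (KSub n k) where
  smul σ S := ⟨σ • S.1, by rw [Finset.card_smul_finset]; exact S.2⟩
  one_smul S := Subtype.ext (one_smul _ S.1)
  mul_smul σ τ S := Subtype.ext (mul_smul σ τ S.1)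

/-- The endomorphism of the free product induced by a permutation of `Fin n`. -/
def fpHom {n k : ℕ} (σ : Equiv.Perm (Fin n)) : FP n k →* FP n k :=
  Monoid.CoprodI.lift (fun S => Monoid.CoprodI.of (M := fun _ : KSub n k => Multiplicative (ZMod 2)) (i := σ • S))

lemma fpHom_comp {n k : ℕ} (σ τ : Equiv.Perm (Fin n)) :
    (fpHom (n := n) (k := k) σ).comp (fpHom τ) = fpHom (σ * τ) := by
  apply Monoid.CoprodI.ext_hom
  intro S
  ext x
  simp [fpHom, Monoid.CoprodI.lift_of, mul_smul]

lemma fpHom_one {n k : ℕ} : fpHom (n := n) (k := k) 1 = MonoidHom.id _ := by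
  apply Monoid.CoprodI.ext_hom
  intro S
  ext x
  simp [fpHom, Monoid.CoprodI.lift_of]

/-- The action of `Sym(Fin n)` on the free product, permuting the free factors. -/
def fpAut (n k : ℕ) : Equiv.Perm (Fin n) →* MulAut (FP n k) :=
  MonoidHom.mk' (fun σ =>
    { toFun := fpHom σ
      invFun := fpHom σ⁻¹
      left_inv := fun x => by
        have h := fpHom_comp (n := n) (k := k) σ⁻¹ σ
        rw [inv_mul_cancel, fpHom_one] at h
        exact DFunLike.congr_fun h x
      right_inv := fun x => by
        have h := fpHom_comp (n := n) (k := k) σ σ⁻¹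
        rw [mul_inv_cancel, fpHom_one] at h
        exact DFunLike.congr_fun h x
      map_mul' := map_mul _ })
    (fun σ τ => by
      ext x
      exact (DFunLike.congr_fun (fpHom_comp (n := n) (k := k) σ τ) x).symm)

/-- The progenitor `2^{⋆C(n,k)} : Sₙ`. -/
abbrev Progenitor (n k : ℕ) := FP n k ⋊[fpAut n k] Equiv.Perm (Fin n)

/-- The target group: the quotient of the progenitor by the normal closure of the
single relator `(t_{S₀}·σ₀)³`. -/
abbrev TargetGroup (n k : ℕ) (S₀ : KSub n k) (σ₀ : Equiv.Perm (Fin n)) :=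
  Progenitor n k ⧸ Subgroup.normalClosure
    {(SemidirectProduct.inl (tFP S₀) * SemidirectProduct.inr σ₀) ^ 3}

/-- The image in the target group of the symmetric generator `t_S`. -/
def tbar {n k : ℕ} (S₀ : KSub n k) (σ₀ : Equiv.Perm (Fin n)) (S : KSub n k) :
    TargetGroup n k S₀ σ₀ :=
  QuotientGroup.mk (SemidirectProduct.inl (tFP S))

/-- The canonical map from the control group `Sₙ` to the target group. -/
def pbar {n k : ℕ} (S₀ : KSub n k) (σ₀ : Equiv.Perm (Fin n)) :
    Equiv.Perm (Fin n) →* TargetGroup n k S₀ σ₀ :=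
  (QuotientGroup.mk' _).comp (SemidirectProduct.inr)

/-- The subset `{1, 2}` (0-based: `{0, 1}`) of `Fin n`. -/
def S12 (n : ℕ) (hn : 4 ≤ n) : KSub n 2 :=
  ⟨{⟨0, by omega⟩, ⟨1, by omega⟩}, Finset.card_pair (by simp [Fin.ext_iff])⟩

/-- The transposition `(2 3)` (0-based: `(1 2)`) of `Fin n`. -/
def σD (n : ℕ) (hn : 4 ≤ n) : Equiv.Perm (Fin n) :=
  Equiv.swap ⟨1, by omega⟩ ⟨2, by omega⟩

/-- The target group `G_D(n)`, obtained by factoring the progenitor `2^{⋆C(n,2)} : Sₙ`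
by the single relator `(t_{12}·(2 3))³`. -/
abbrev GD (n : ℕ) (hn : 4 ≤ n) := TargetGroup n 2 (S12 n hn) (σD n hn)

/-- The symmetric generator `t_{ij}` of `G_D(n)`. -/
def tD {n : ℕ} (hn : 4 ≤ n) (i j : Fin n) (h : i ≠ j) : GD n hn :=
  tbar (S12 n hn) (σD n hn) ⟨{i, j}, Finset.card_pair h⟩

/-- The canonical map from the control group `Sₙ` to `G_D(n)`. -/
def pD {n : ℕ} (hn : 4 ≤ n) : Equiv.Perm (Fin n) →* GD n hn :=
  pbar (S12 n hn) (σD n hn)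


section AuxProof

variable {n k : ℕ} (S₀ : KSub n k) (σ₀ : Equiv.Perm (Fin n))

lemma smul_pair {α : Type*} [DecidableEq α] (σ : Equiv.Perm α) (x y : α) :
    σ • ({x, y} : Finset α) = {σ x, σ y} := by
  rw [Finset.smul_finset_insert, Finset.smul_finset_singleton, Equiv.Perm.smul_def,
    Equiv.Perm.smul_def]

lemma KSub.coe_smul {n' k' : ℕ} (σ : Equiv.Perm (Fin n')) (S : KSub n' k') :
    (σ • S).1 = σ • S.1 := rfl

lemma tFP_mul_self (S : KSub n k) : tFP S * tFP S = 1 := by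
  rw [tFP, ← MonoidHom.map_mul, ← ofAdd_add]
  have : ((1 : ZMod 2) + 1) = 0 := by decide
  rw [this, ofAdd_zero, map_one]

lemma tbar_mul_self (S : KSub n k) : tbar S₀ σ₀ S * tbar S₀ σ₀ S = 1 := by
  rw [tbar, ← QuotientGroup.mk_mul, ← map_mul, tFP_mul_self, map_one]
  rfl

lemma fpAut_tFP (ρ : Equiv.Perm (Fin n)) (S : KSub n k) :
    fpAut n k ρ (tFP S) = tFP (ρ • S) := by
  show fpHom ρ (tFP S) = tFP (ρ • S)
  rw [tFP, fpHom, Monoid.CoprodI.lift_of]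
  rfl

lemma pbar_tbar_conj (ρ : Equiv.Perm (Fin n)) (S : KSub n k) :
    pbar S₀ σ₀ ρ * tbar S₀ σ₀ S * (pbar S₀ σ₀ ρ)⁻¹ = tbar S₀ σ₀ (ρ • S) := by
  have h := SemidirectProduct.inl_aut (φ := fpAut n k) ρ (tFP S)
  rw [fpAut_tFP] at h
  show QuotientGroup.mk _ * QuotientGroup.mk _ * (QuotientGroup.mk _)⁻¹ = QuotientGroup.mk _
  rw [← QuotientGroup.mk_inv, ← QuotientGroup.mk_mul, ← QuotientGroup.mk_mul, ← map_inv, ← h]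

lemma base_rel : (tbar S₀ σ₀ S₀ * pbar S₀ σ₀ σ₀) ^ 3 = 1 := by
  show ((QuotientGroup.mk _ : TargetGroup n k S₀ σ₀) * QuotientGroup.mk _) ^ 3 = 1
  rw [← QuotientGroup.mk_mul, ← QuotientGroup.mk_pow]
  exact (QuotientGroup.eq_one_iff _).mpr (Subgroup.subset_normalClosure rfl)

lemma rel_conj (hσ : σ₀ * σ₀ = 1) (ρ : Equiv.Perm (Fin n)) :
    tbar S₀ σ₀ (ρ • S₀) * tbar S₀ σ₀ ((ρ * σ₀) • S₀) * tbar S₀ σ₀ (ρ • S₀) =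
      pbar S₀ σ₀ (ρ * σ₀ * ρ⁻¹) := by
  have hq2 : pbar S₀ σ₀ (ρ * σ₀ * ρ⁻¹) * pbar S₀ σ₀ (ρ * σ₀ * ρ⁻¹) = 1 := by
    rw [← map_mul]
    have : (ρ * σ₀ * ρ⁻¹) * (ρ * σ₀ * ρ⁻¹) = ρ * (σ₀ * σ₀) * ρ⁻¹ := by
      simp [mul_assoc]
    rw [this, hσ, mul_one, mul_inv_cancel, map_one]
  have hqinv : (pbar S₀ σ₀ (ρ * σ₀ * ρ⁻¹))⁻¹ = pbar S₀ σ₀ (ρ * σ₀ * ρ⁻¹) :=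
    inv_eq_of_mul_eq_one_right hq2
  have hqu : pbar S₀ σ₀ (ρ * σ₀ * ρ⁻¹) * tbar S₀ σ₀ (ρ • S₀) *
      (pbar S₀ σ₀ (ρ * σ₀ * ρ⁻¹))⁻¹ = tbar S₀ σ₀ ((ρ * σ₀) • S₀) := by
    rw [pbar_tbar_conj, smul_smul]
    congr 2
    simp [mul_assoc]
  have hPt : pbar S₀ σ₀ ρ * tbar S₀ σ₀ S₀ * (pbar S₀ σ₀ ρ)⁻¹ = tbar S₀ σ₀ (ρ • S₀) :=
    pbar_tbar_conj S₀ σ₀ ρ S₀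
  have hPp : pbar S₀ σ₀ ρ * pbar S₀ σ₀ σ₀ * (pbar S₀ σ₀ ρ)⁻¹ = pbar S₀ σ₀ (ρ * σ₀ * ρ⁻¹) := by
    rw [← map_inv, ← map_mul, ← map_mul]
  have huq3 : (tbar S₀ σ₀ (ρ • S₀) * pbar S₀ σ₀ (ρ * σ₀ * ρ⁻¹)) ^ 3 = 1 := by
    rw [← hPt, ← hPp]
    have : pbar S₀ σ₀ ρ * tbar S₀ σ₀ S₀ * (pbar S₀ σ₀ ρ)⁻¹ *
        (pbar S₀ σ₀ ρ * pbar S₀ σ₀ σ₀ * (pbar S₀ σ₀ ρ)⁻¹) =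
        pbar S₀ σ₀ ρ * (tbar S₀ σ₀ S₀ * pbar S₀ σ₀ σ₀) * (pbar S₀ σ₀ ρ)⁻¹ := by
      simp [mul_assoc]
    rw [this, conj_pow, base_rel, mul_one, mul_inv_cancel]
  set u := tbar S₀ σ₀ (ρ • S₀)
  set q := pbar S₀ σ₀ (ρ * σ₀ * ρ⁻¹)
  have hexp : u * q * u * q * u * q = 1 := by
    rw [show u * q * u * q * u * q = (u * q) ^ 3 by
      simp only [pow_succ, pow_zero, one_mul, mul_assoc], huq3]
  have h5 : u * q * u * q * u = q⁻¹ := eq_inv_iff_mul_eq_one.mpr hexp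
  calc u * tbar S₀ σ₀ ((ρ * σ₀) • S₀) * u
      = u * (q * u * q⁻¹) * u := by rw [hqu]
    _ = u * q * u * q * u := by rw [hqinv]; simp only [mul_assoc]
    _ = q⁻¹ := h5
    _ = q := hqinv

end AuxProof

section AuxD

variable {n : ℕ} (hn : 4 ≤ n)

lemma tD_mul_self (i j : Fin n) (h : i ≠ j) : tD hn i j h * tD hn i j h = 1 :=
  tbar_mul_self _ _ _

lemma tD_symm (i j : Fin n) (h : i ≠ j) : tD hn i j h = tD hn j i h.symm := by
  unfold tD
  congr 1
  exact Subtype.ext (Finset.pair_comm i j)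

set_option maxHeartbeats 1000000 in
lemma relD {a b c : Fin n} (hab : a ≠ b) (hac : a ≠ c) (ρ : Equiv.Perm (Fin n))
    (h0 : ρ ⟨0, by omega⟩ = a) (h1 : ρ ⟨1, by omega⟩ = b) (h2 : ρ ⟨2, by omega⟩ = c) :
    tD hn a b hab * tD hn a c hac * tD hn a b hab = pD hn (Equiv.swap b c) := by
  have key := rel_conj (S12 n hn) (σD n hn) (Equiv.swap_mul_self _ _) ρ
  have e1 : (ρ • S12 n hn : KSub n 2) = ⟨{a, b}, Finset.card_pair hab⟩ := by
    apply Subtype.ext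
    rw [KSub.coe_smul]
    show ρ • ({⟨0, by omega⟩, ⟨1, by omega⟩} : Finset (Fin n)) = {a, b}
    rw [smul_pair, h0, h1]
  have e2 : ((ρ * σD n hn) • S12 n hn : KSub n 2) = ⟨{a, c}, Finset.card_pair hac⟩ := by
    apply Subtype.ext
    rw [KSub.coe_smul]
    show (ρ * σD n hn) • ({⟨0, by omega⟩, ⟨1, by omega⟩} : Finset (Fin n)) = {a, c}
    rw [smul_pair]
    have s0 : σD n hn ⟨0, by omega⟩ = ⟨0, by omega⟩ :=
      Equiv.swap_apply_of_ne_of_ne (by simp [Fin.ext_iff]) (by simp [Fin.ext_iff])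
    have s1 : σD n hn ⟨1, by omega⟩ = ⟨2, by omega⟩ := Equiv.swap_apply_left _ _
    have v0 : (ρ * σD n hn) ⟨0, by omega⟩ = a := by rw [Equiv.Perm.mul_apply, s0, h0]
    have v1 : (ρ * σD n hn) ⟨1, by omega⟩ = c := by rw [Equiv.Perm.mul_apply, s1, h2]
    rw [v0, v1]
  have e3 : ρ * σD n hn * ρ⁻¹ = Equiv.swap b c := by
    rw [← h1, ← h2, Equiv.swap_apply_apply]
    rfl
  rw [e1, e2, e3] at key
  exact key

end AuxD

lemma groupCalc {G : Type*} [Group G] (t01 t02 t13 t23 p12 p03 : G)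
    (F1 : t23 * t13 * t23 = p12) (F2 : t02 * t23 * t02 = p03)
    (F3 : p12 * t02 = t01 * p12)
    (s02 : t02 * t02 = 1) (s23 : t23 * t23 = 1) (sp : p12 * p12 = 1) :
    t01 * t23 = p12 * p03 * (t02 * t13) := by
  have h2313 : t23 * t13 = p12 * t23 := by
    calc t23 * t13 = t23 * t13 * (t23 * t23) := by rw [s23, mul_one]
      _ = t23 * t13 * t23 * t23 := by simp only [mul_assoc]
      _ = p12 * t23 := by rw [F1]
  calc t01 * t23 = t01 * ((p12 * p12) * t23) := by rw [sp, one_mul]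
    _ = t01 * p12 * p12 * t23 := by simp only [mul_assoc]
    _ = p12 * t02 * p12 * t23 := by rw [F3]
    _ = p12 * (t02 * (p12 * t23)) := by simp only [mul_assoc]
    _ = p12 * (t02 * (t23 * t13)) := by rw [h2313]
    _ = p12 * (t02 * (t23 * ((t02 * t02) * t13))) := by rw [s02, one_mul]
    _ = p12 * (t02 * t23 * t02) * (t02 * t13) := by simp only [mul_assoc]
    _ = p12 * p03 * (t02 * t13) := by rw [F2]

lemma coe_mul_singleton_of_mem {G : Type*} [Group G] (H : Subgroup G) {g : G} (hg : g ∈ H) :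
    (H : Set G) * {g} = (H : Set G) := by
  ext x
  rw [Set.mul_singleton]
  constructor
  · rintro ⟨y, hy, rfl⟩
    exact H.mul_mem hy hg
  · intro hx
    exact ⟨x * g⁻¹, H.mul_mem hx (H.inv_mem hg), by simp⟩

/-- For every `n ≥ 4`, in `G_D(n)` one has
`t_{12}·t_{34} = ((2 3)(1 4))·t_{13}·t_{24}` (written 0-based below); in particular the
double cosets `N·t_{12}t_{34}·N` and `N·t_{13}t_{24}·N` coincide, where `N` is the image of
`Sym(Fin n)` in `G_D(n)`. -/
theorem targetGroup_D_t12_t34_eq (n : ℕ) (hn : 4 ≤ n) :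
    tD hn ⟨0, by omega⟩ ⟨1, by omega⟩ (by simp [Fin.ext_iff]) *
        tD hn ⟨2, by omega⟩ ⟨3, by omega⟩ (by simp [Fin.ext_iff]) =
      pD hn (Equiv.swap ⟨1, by omega⟩ ⟨2, by omega⟩ * Equiv.swap ⟨0, by omega⟩ ⟨3, by omega⟩) *
        (tD hn ⟨0, by omega⟩ ⟨2, by omega⟩ (by simp [Fin.ext_iff]) *
          tD hn ⟨1, by omega⟩ ⟨3, by omega⟩ (by simp [Fin.ext_iff])) ∧
      (((pD hn).range : Set (GD n hn)) *
            {tD hn ⟨0, by omega⟩ ⟨1, by omega⟩ (by simp [Fin.ext_iff]) *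
              tD hn ⟨2, by omega⟩ ⟨3, by omega⟩ (by simp [Fin.ext_iff])} *
            ((pD hn).range : Set (GD n hn)) =
          ((pD hn).range : Set (GD n hn)) *
            {tD hn ⟨0, by omega⟩ ⟨2, by omega⟩ (by simp [Fin.ext_iff]) *
              tD hn ⟨1, by omega⟩ ⟨3, by omega⟩ (by simp [Fin.ext_iff])} *
            ((pD hn).range : Set (GD n hn))) := by
  have F1 : tD hn ⟨2, by omega⟩ ⟨3, by omega⟩ (by simp [Fin.ext_iff]) *
      tD hn ⟨1, by omega⟩ ⟨3, by omega⟩ (by simp [Fin.ext_iff]) *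
      tD hn ⟨2, by omega⟩ ⟨3, by omega⟩ (by simp [Fin.ext_iff]) =
      pD hn (Equiv.swap ⟨1, by omega⟩ ⟨2, by omega⟩) := by
    rw [tD_symm hn ⟨2, by omega⟩, tD_symm hn ⟨1, by omega⟩, Equiv.swap_comm]
    exact relD hn (by simp [Fin.ext_iff]) (by simp [Fin.ext_iff])
      (Equiv.swap ⟨0, by omega⟩ ⟨3, by omega⟩ * Equiv.swap ⟨1, by omega⟩ ⟨2, by omega⟩)
      (by simp [Equiv.Perm.mul_apply, Equiv.swap_apply_def, Fin.ext_iff])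
      (by simp [Equiv.Perm.mul_apply, Equiv.swap_apply_def, Fin.ext_iff])
      (by simp [Equiv.Perm.mul_apply, Equiv.swap_apply_def, Fin.ext_iff])
  have F2 : tD hn ⟨0, by omega⟩ ⟨2, by omega⟩ (by simp [Fin.ext_iff]) *
      tD hn ⟨2, by omega⟩ ⟨3, by omega⟩ (by simp [Fin.ext_iff]) *
      tD hn ⟨0, by omega⟩ ⟨2, by omega⟩ (by simp [Fin.ext_iff]) =
      pD hn (Equiv.swap ⟨0, by omega⟩ ⟨3, by omega⟩) := by
    rw [tD_symm hn ⟨0, by omega⟩ ⟨2, by omega⟩]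
    exact relD hn (by simp [Fin.ext_iff]) (by simp [Fin.ext_iff])
      (Equiv.swap ⟨1, by omega⟩ ⟨0, by omega⟩ * Equiv.swap ⟨0, by omega⟩ ⟨2, by omega⟩ *
        Equiv.swap ⟨2, by omega⟩ ⟨3, by omega⟩)
      (by simp [Equiv.Perm.mul_apply, Equiv.swap_apply_def, Fin.ext_iff])
      (by simp [Equiv.Perm.mul_apply, Equiv.swap_apply_def, Fin.ext_iff])
      (by simp [Equiv.Perm.mul_apply, Equiv.swap_apply_def, Fin.ext_iff])
  have F3 : pD hn (Equiv.swap ⟨1, by omega⟩ ⟨2, by omega⟩) *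
      tD hn ⟨0, by omega⟩ ⟨2, by omega⟩ (by simp [Fin.ext_iff]) =
      tD hn ⟨0, by omega⟩ ⟨1, by omega⟩ (by simp [Fin.ext_iff]) *
      pD hn (Equiv.swap ⟨1, by omega⟩ ⟨2, by omega⟩) := by
    have h := pbar_tbar_conj (S12 n hn) (σD n hn) (Equiv.swap ⟨1, by omega⟩ ⟨2, by omega⟩)
      ⟨{⟨0, by omega⟩, ⟨2, by omega⟩}, Finset.card_pair (by simp [Fin.ext_iff])⟩
    have e : (Equiv.swap (⟨1, by omega⟩ : Fin n) ⟨2, by omega⟩ •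
        (⟨{⟨0, by omega⟩, ⟨2, by omega⟩}, Finset.card_pair (by simp [Fin.ext_iff])⟩ : KSub n 2)) =
        (⟨{⟨0, by omega⟩, ⟨1, by omega⟩}, Finset.card_pair (by simp [Fin.ext_iff])⟩ : KSub n 2) := by
      apply Subtype.ext
      rw [KSub.coe_smul]
      show Equiv.swap (⟨1, by omega⟩ : Fin n) ⟨2, by omega⟩ •
        ({⟨0, by omega⟩, ⟨2, by omega⟩} : Finset (Fin n)) = {⟨0, by omega⟩, ⟨1, by omega⟩}
      rw [smul_pair]
      congr 1 <;> simp [Equiv.swap_apply_def, Fin.ext_iff]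
    rw [e] at h
    calc pD hn (Equiv.swap ⟨1, by omega⟩ ⟨2, by omega⟩) *
        tD hn ⟨0, by omega⟩ ⟨2, by omega⟩ (by simp [Fin.ext_iff])
        = pD hn (Equiv.swap ⟨1, by omega⟩ ⟨2, by omega⟩) *
          tD hn ⟨0, by omega⟩ ⟨2, by omega⟩ (by simp [Fin.ext_iff]) *
          ((pD hn (Equiv.swap ⟨1, by omega⟩ ⟨2, by omega⟩))⁻¹ *
            pD hn (Equiv.swap ⟨1, by omega⟩ ⟨2, by omega⟩)) := by
            rw [inv_mul_cancel, mul_one]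
      _ = pD hn (Equiv.swap ⟨1, by omega⟩ ⟨2, by omega⟩) *
          tD hn ⟨0, by omega⟩ ⟨2, by omega⟩ (by simp [Fin.ext_iff]) *
          (pD hn (Equiv.swap ⟨1, by omega⟩ ⟨2, by omega⟩))⁻¹ *
          pD hn (Equiv.swap ⟨1, by omega⟩ ⟨2, by omega⟩) := by simp only [mul_assoc]
      _ = tD hn ⟨0, by omega⟩ ⟨1, by omega⟩ (by simp [Fin.ext_iff]) *
          pD hn (Equiv.swap ⟨1, by omega⟩ ⟨2, by omega⟩) := by
            simp only [tD, pD]; rw [h]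
  have sqp : pD hn (Equiv.swap ⟨1, by omega⟩ ⟨2, by omega⟩) *
      pD hn (Equiv.swap ⟨1, by omega⟩ ⟨2, by omega⟩) = 1 := by
    rw [← map_mul, Equiv.swap_mul_self, map_one]
  have main : tD hn ⟨0, by omega⟩ ⟨1, by omega⟩ (by simp [Fin.ext_iff]) *
      tD hn ⟨2, by omega⟩ ⟨3, by omega⟩ (by simp [Fin.ext_iff]) =
      pD hn (Equiv.swap ⟨1, by omega⟩ ⟨2, by omega⟩ * Equiv.swap ⟨0, by omega⟩ ⟨3, by omega⟩) *
      (tD hn ⟨0, by omega⟩ ⟨2, by omega⟩ (by simp [Fin.ext_iff]) *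
        tD hn ⟨1, by omega⟩ ⟨3, by omega⟩ (by simp [Fin.ext_iff])) := by
    rw [map_mul]
    exact groupCalc _ _ _ _ _ _ F1 F2 F3 (tD_mul_self hn _ _ _) (tD_mul_self hn _ _ _) sqp
  refine ⟨main, ?_⟩
  rw [main, ← Set.singleton_mul_singleton, ← mul_assoc,
    coe_mul_singleton_of_mem (pD hn).range (MonoidHom.mem_range.mpr ⟨_, rfl⟩)]
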